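/- Let U be an open subset of ℂ containing 0, and let f be a holomorphic function on U with f(0) ≠ 0. Then there are infinitely many z ∈ U \ {0} such that exp(1/z) = f(z). -/

import Mathlib

open Complex Metric Set Real Function

/-- Let `U ⊆ ℂ` be open with `0 ∈ U` and let `f` be holomorphic on `U` with `f 0 ≠ 0`.
Then there are infinitely many `z ∈ U \ {0}` with `exp(1/z) = f z`. -/
theorem infinitely_many_solutions_exp_inv (U : Set ℂ) (hUopen : IsOpen U)
    (h0 : (0 : ℂ) ∈ U) (f : ℂ → ℂ) (hf : DifferentiableOn ℂ f U)
    (hf0 : f 0 ≠ 0) :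
    {z : ℂ | z ∈ U ∧ z ≠ 0 ∧ Complex.exp (1 / z) = f z}.Infinite := by
  -- Step 1: a ball around 0 where `f z / f 0` is close to 1
  have hcont : ContinuousAt (fun z => f z / f 0) 0 :=
    (hf.continuousOn.continuousAt (hUopen.mem_nhds h0)).div_const _
  have h1 : (fun z => f z / f 0) ⁻¹' Metric.ball (1 : ℂ) (1/2) ∈ nhds (0 : ℂ) := by
    have hd : f 0 / f 0 = 1 := div_self hf0
    have h := hcont (Metric.ball_mem_nhds (f 0 / f 0) (by norm_num : (0:ℝ) < 1/2))
    rw [hd] at h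
    exact h
  obtain ⟨ε, εpos, hball⟩ : ∃ ε > 0, Metric.ball (0:ℂ) ε ⊆
      U ∩ (fun z => f z / f 0) ⁻¹' Metric.ball (1 : ℂ) (1/2) := by
    rcases Metric.mem_nhds_iff.1 (Filter.inter_mem (hUopen.mem_nhds h0) h1) with ⟨ε, εpos, hε⟩
    exact ⟨ε, εpos, hε⟩
  set δ : ℝ := ε / 2 with hδdef
  have δpos : 0 < δ := by positivity
  set s : Set ℂ := Metric.closedBall (0:ℂ) δ with hsdef
  have hsub : s ⊆ Metric.ball (0:ℂ) ε := Metric.closedBall_subset_ball (by linarith)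
  -- facts on the ball
  have hmemU : ∀ z ∈ Metric.ball (0:ℂ) ε, z ∈ U := fun z hz => (hball hz).1
  have hwball : ∀ z ∈ Metric.ball (0:ℂ) ε, ‖f z / f 0 - 1‖ < 1/2 := by
    intro z hz
    have := (hball hz).2
    rwa [Set.mem_preimage, Metric.mem_ball, dist_eq_norm] at this
  have hslit : ∀ z ∈ Metric.ball (0:ℂ) ε, f z / f 0 ∈ Complex.slitPlane := by
    intro z hz
    left
    have h := hwball z hz
    have h2 : |(f z / f 0 - 1).re| ≤ ‖f z / f 0 - 1‖ := Complex.abs_re_le_norm _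
    have h3 : (f z / f 0 - 1).re = (f z / f 0).re - 1 := by simp
    have := abs_le.1 (h2.trans h.le)
    simp only [h3] at this
    linarith [this.1]
  have hw0 : ∀ z ∈ Metric.ball (0:ℂ) ε, f z / f 0 ≠ 0 := fun z hz =>
    Complex.slitPlane_ne_zero (hslit z hz)
  -- the holomorphic logarithm
  set g : ℂ → ℂ := fun z => Complex.log (f z / f 0) + Complex.log (f 0) with hgdef
  have hgd : ∀ z ∈ Metric.ball (0:ℂ) ε, DifferentiableAt ℂ g z := by
    intro z hz
    have hfz : DifferentiableAt ℂ f z := hf.differentiableAt (hUopen.mem_nhds (hmemU z hz))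
    exact ((Complex.differentiableAt_log (hslit z hz)).comp z (hfz.div_const _)).add_const _
  have hgexp : ∀ z ∈ Metric.ball (0:ℂ) ε, Complex.exp (g z) = f z := by
    intro z hz
    rw [hgdef]
    rw [Complex.exp_add, Complex.exp_log (hw0 z hz), Complex.exp_log hf0,
      div_mul_cancel₀ _ hf0]
  -- Lipschitz and sup bounds for g on the closed ball
  have hganal : AnalyticOnNhd ℂ g (Metric.ball (0:ℂ) ε) :=
    (DifferentiableOn.analyticOnNhd
      (fun z hz => (hgd z hz).differentiableWithinAt) Metric.isOpen_ball)
  obtain ⟨C, hC⟩ := (isCompact_closedBall (0:ℂ) δ).exists_bound_of_continuousOn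
    ((hganal.fderiv.continuousOn).mono hsub)
  set L : NNReal := C.toNNReal with hLdef
  have hLip : LipschitzOnWith L g s := by
    apply (convex_closedBall _ _).lipschitzOnWith_of_nnnorm_fderiv_le
      (fun x hx => hgd x (hsub hx))
    intro x hx
    have : ‖fderiv ℂ g x‖ ≤ (L : ℝ) := (hC x hx).trans (Real.le_coe_toNNReal C)
    exact_mod_cast this
  obtain ⟨M, hM⟩ := (isCompact_closedBall (0:ℂ) δ).exists_bound_of_continuousOn
    (fun z hz => ((hgd z (hsub hz)).continuousAt).continuousWithinAt)
  -- constants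
  set A : ℝ := max (1/δ) ((L:ℝ) + 1) with hAdef
  have hA1 : 1/δ ≤ A := le_max_left _ _
  have hA2 : (L:ℝ) + 1 ≤ A := le_max_right _ _
  have hA3 : (1:ℝ) ≤ A := le_trans (le_add_of_nonneg_left L.coe_nonneg) hA2
  have hApos : 0 < A := lt_of_lt_of_le one_pos hA3
  obtain ⟨N, hN⟩ := exists_nat_ge ((M + A) / (2 * π))
  set c : ℕ → ℂ := fun n => ((N + n : ℕ) : ℂ) * (2 * π * Complex.I) with hcdef
  have hcexp : ∀ n, Complex.exp (c n) = 1 := fun n => Complex.exp_nat_mul_two_pi_mul_I _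
  have hcnorm : ∀ n, ‖c n‖ = (N + n : ℕ) * (2 * π) := by
    intro n
    rw [hcdef]
    rw [norm_mul]
    simp only [Complex.norm_natCast]
    have : ‖(2 * ↑π * Complex.I : ℂ)‖ = 2 * π := by
      simp [norm_mul, Complex.norm_real, Real.norm_eq_abs, abs_of_pos Real.pi_pos]
    rw [this]
  have hcbig : ∀ n, M + A ≤ ‖c n‖ := by
    intro n
    rw [hcnorm]
    have h1 : (M + A) / (2 * π) ≤ ((N + n : ℕ) : ℝ) := by
      refine hN.trans ?_
      exact_mod_cast Nat.le_add_right N n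
    calc M + A = (M + A) / (2*π) * (2*π) := by
          field_simp
      _ ≤ ((N + n : ℕ) : ℝ) * (2 * π) := by
          apply mul_le_mul_of_nonneg_right h1 (by positivity)
  -- lower bound on the denominator
  have hlow : ∀ n, ∀ z ∈ s, A ≤ ‖g z + c n‖ := by
    intro n z hz
    have h1 : ‖c n‖ ≤ ‖g z + c n‖ + ‖g z‖ := by
      calc ‖c n‖ = ‖(g z + c n) + (-(g z))‖ := by ring_nf
        _ ≤ ‖g z + c n‖ + ‖-(g z)‖ := norm_add_le _ _
        _ = ‖g z + c n‖ + ‖g z‖ := by rw [norm_neg]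
    have := hcbig n
    have := hM z hz
    linarith
  have hne : ∀ n, ∀ z ∈ s, g z + c n ≠ 0 := by
    intro n z hz h
    have := hlow n z hz
    rw [h, norm_zero] at this
    linarith
  set F : ℕ → ℂ → ℂ := fun n z => (g z + c n)⁻¹ with hFdef
  have hmaps : ∀ n, Set.MapsTo (F n) s s := by
    intro n z hz
    rw [hsdef, Metric.mem_closedBall, dist_zero_right]
    have h1 : ‖F n z‖ = ‖g z + c n‖⁻¹ := by rw [hFdef]; simp
    rw [h1]
    have h2 : A⁻¹ ≤ δ := by
      have hδA : δ⁻¹ ≤ A := by rwa [one_div] at hA1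
      have h3 := inv_anti₀ (by positivity : (0:ℝ) < δ⁻¹) hδA
      rwa [inv_inv] at h3
    refine le_trans ?_ h2
    exact inv_anti₀ hApos (hlow n z hz)
  set K : NNReal := L / (L + 1) with hKdef
  have hK1 : K < 1 := by
    rw [hKdef]
    rw [div_lt_one (by positivity)]
    exact lt_add_one L
  have hFlip : ∀ n, LipschitzOnWith K (F n) s := by
    intro n
    apply LipschitzOnWith.of_dist_le_mul
    intro x hx y hy
    have hax := hne n x hx
    have hay := hne n y hy
    have key : F n x - F n y = (g y - g x) / ((g x + c n) * (g y + c n)) := by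
      rw [hFdef]
      rw [inv_sub_inv hax hay]
      ring_nf
    have hnorm : dist (F n x) (F n y) =
        ‖g y - g x‖ / (‖g x + c n‖ * ‖g y + c n‖) := by
      rw [dist_eq_norm, key, norm_div, norm_mul]
    rw [hnorm]
    have hgxy : ‖g y - g x‖ ≤ (L : ℝ) * dist x y := by
      have := hLip.dist_le_mul y hy x hx
      rwa [dist_eq_norm, dist_comm y x] at this
    have hAA : (L : ℝ) + 1 ≤ ‖g x + c n‖ * ‖g y + c n‖ := by
      calc (L:ℝ) + 1 ≤ A := hA2
        _ = A * 1 := (mul_one A).symm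
        _ ≤ ‖g x + c n‖ * ‖g y + c n‖ :=
            mul_le_mul (hlow n x hx) (hA3.trans (hlow n y hy)) zero_le_one
              (le_trans (le_of_lt hApos) (hlow n x hx))
    calc ‖g y - g x‖ / (‖g x + c n‖ * ‖g y + c n‖)
        ≤ ((L:ℝ) * dist x y) / ((L:ℝ) + 1) := by
          apply div_le_div₀ (by positivity) hgxy (by positivity) hAA
      _ = (K : ℝ) * dist x y := by
          rw [hKdef]
          push_cast
          ring
  -- fixed points
  have key : ∀ n : ℕ, ∃ y, y ∈ s ∧ y ≠ 0 ∧ 1 / y = g y + c n := by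
    intro n
    have hcontr : ContractingWith K ((hmaps n).restrict (F n) s s) :=
      ⟨hK1, (hFlip n).mapsToRestrict (hmaps n)⟩
    obtain ⟨y, hys, hfix, -, -⟩ := hcontr.exists_fixedPoint'
      (Metric.isClosed_closedBall.isComplete) (hmaps n)
      (Metric.mem_closedBall_self δpos.le) (edist_ne_top _ _)
    refine ⟨y, hys, ?_, ?_⟩
    · rw [← hfix, hFdef]
      exact inv_ne_zero (hne n y hys)
    · conv_lhs => rw [← hfix]
      rw [hFdef]
      simp [inv_inv, one_div]
  choose Z hZs hZ0 hZe using key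
  apply Set.infinite_of_injective_forall_mem (f := Z)
  · -- injectivity
    intro n m hnm
    have h1 : g (Z n) + c n = g (Z m) + c m := by
      rw [← hZe n, ← hZe m, hnm]
    rw [hnm] at h1
    have h2 : c n = c m := by
      exact add_left_cancel h1
    rw [hcdef] at h2
    simp only at h2
    have h3 : ((N + n : ℕ) : ℂ) = ((N + m : ℕ) : ℂ) :=
      mul_right_cancel₀ Complex.two_pi_I_ne_zero h2
    have h4 : N + n = N + m := Nat.cast_injective h3
    omega
  · -- membership
    intro n
    have hb : Z n ∈ Metric.ball (0:ℂ) ε := hsub (hZs n)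
    refine ⟨hmemU _ hb, hZ0 n, ?_⟩
    rw [hZe n, Complex.exp_add, hgexp _ hb, hcexp n, mul_one]
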